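/- Define I₀(z) := ∑_{k=0}^∞ (z²/4)^k / (k!)². Then for every real β ≥ 0, one has I₀(2β) ≤ exp(β) · I₀(β). -/

import Mathlib

open Real

open MeasureTheory intervalIntegral

lemma cos_pow_even_integral (m : ℕ) :
    ∫ x in (0:ℝ)..π, Real.cos x ^ (2 * m)
      = π * ((2 * m).factorial : ℝ) / (4 ^ m * ((m.factorial : ℝ)) ^ 2) := by
  induction m with
  | zero => simp
  | succ m ih =>
    have h : 2 * (m + 1) = 2 * m + 2 := by ring
    rw [h, integral_cos_pow, ih]
    have h1 : ((m.factorial : ℝ)) ≠ 0 := Nat.cast_ne_zero.mpr m.factorial_ne_zero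
    have h2 : (4:ℝ) ^ m ≠ 0 := by positivity
    have e1 : (2 * m + 2).factorial = (2*m+2) * ((2*m+1) * (2*m).factorial) := by
      rw [show 2*m+2 = (2*m+1)+1 from rfl, Nat.factorial_succ, Nat.factorial_succ]
    have e2 : (m+1).factorial = (m+1) * m.factorial := Nat.factorial_succ m
    rw [e1, e2]
    have h3 : (2*(m:ℝ)+2) ≠ 0 := by positivity
    push_cast
    field_simp
    simp only [Real.sin_pi, Real.sin_zero, mul_zero, zero_mul, sub_zero, zero_add]
    ring

lemma cos_pow_odd_integral (m : ℕ) :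
    ∫ x in (0:ℝ)..π, Real.cos x ^ (2 * m + 1) = 0 := by
  induction m with
  | zero => simp
  | succ m ih =>
    have h : 2 * (m + 1) + 1 = (2 * m + 1) + 2 := by ring
    rw [h, integral_cos_pow, ih]
    simp

/-- The zeroth modified Bessel function of the first kind,
`I₀(z) = ∑ₖ (z²/4)ᵏ/(k!)²`. -/
noncomputable def besselI0 (z : ℝ) : ℝ :=
  ∑' k : ℕ, (z ^ 2 / 4) ^ k / ((Nat.factorial k : ℝ)) ^ 2

lemma besselI0_eq_integral (z : ℝ) :
    besselI0 z = π⁻¹ * ∫ θ in (0:ℝ)..π, Real.exp (z * Real.cos θ) := by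
  have expser : ∀ x : ℝ, Real.exp x = ∑' n : ℕ, x ^ n / n.factorial := by
    intro x
    rw [Real.exp_eq_exp_ℝ, NormedSpace.exp_eq_tsum_div]
  set F : ℕ → ℝ → ℝ := fun n θ => (z * Real.cos θ) ^ n / n.factorial with hF
  have hFcont : ∀ n, Continuous (F n) := by
    intro n; fun_prop
  have hF_int : ∀ n, IntegrableOn (F n) (Set.Ioc (0:ℝ) π) volume := fun n =>
    (hFcont n).integrableOn_Ioc
  have hbound : ∀ n θ, ‖F n θ‖ ≤ |z| ^ n / n.factorial := by
    intro n θ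
    have key : |z * Real.cos θ| ≤ |z| := by
      rw [abs_mul]
      exact mul_le_of_le_one_right (abs_nonneg z) (Real.abs_cos_le_one θ)
    simp only [hF, norm_div, norm_pow, Real.norm_eq_abs, Nat.abs_cast]
    gcongr
  have hF_sum : Summable fun n => ∫ θ in Set.Ioc (0:ℝ) π, ‖F n θ‖ := by
    apply Summable.of_nonneg_of_le
      (fun n => integral_nonneg fun θ => norm_nonneg _)
      (fun n => ?_) (((Real.summable_pow_div_factorial |z|).mul_left π))
    calc ∫ θ in Set.Ioc (0:ℝ) π, ‖F n θ‖
        ≤ ∫ _ in Set.Ioc (0:ℝ) π, |z| ^ n / n.factorial := by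
          apply setIntegral_mono ((hF_int n).norm) ((integrableOn_const_iff (C := |z| ^ n / (n.factorial : ℝ))).mpr ?_)
            (fun θ => hbound n θ)
          right; rw [Real.volume_Ioc]; exact ENNReal.ofReal_lt_top
      _ = π * (|z| ^ n / n.factorial) := by
          rw [setIntegral_const, measureReal_def, Real.volume_Ioc, smul_eq_mul,
            ENNReal.toReal_ofReal (by linarith [Real.pi_pos] : (0:ℝ) ≤ π - 0)]
          ring
  have hswap : ∑' n, (∫ θ in Set.Ioc (0:ℝ) π, F n θ)
      = ∫ θ in Set.Ioc (0:ℝ) π, Real.exp (z * Real.cos θ) := by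
    rw [integral_tsum_of_summable_integral_norm hF_int hF_sum]
    apply setIntegral_congr_fun measurableSet_Ioc
    intro θ _
    exact (expser (z * Real.cos θ)).symm
  set g : ℕ → ℝ := fun n => ∫ θ in Set.Ioc (0:ℝ) π, F n θ with hg
  have hgval : ∀ n, g n = z ^ n / n.factorial * ∫ θ in (0:ℝ)..π, Real.cos θ ^ n := by
    intro n
    show (∫ θ in Set.Ioc (0:ℝ) π, F n θ) = _
    rw [← intervalIntegral.integral_of_le Real.pi_pos.le,
      ← intervalIntegral.integral_const_mul]
    congr 1
    ext θ
    rw [hF]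
    simp only [mul_pow]
    ring
  have hg_summable : Summable g := by
    apply Summable.of_norm_bounded hF_sum
    intro n
    exact norm_integral_le_integral_norm _
  have heven : ∀ k, g (2 * k) = π * ((z ^ 2 / 4) ^ k / ((k.factorial : ℝ)) ^ 2) := by
    intro k
    rw [hgval, cos_pow_even_integral]
    have h2 : ((2 * k).factorial : ℝ) ≠ 0 := Nat.cast_ne_zero.mpr (Nat.factorial_ne_zero _)
    have h3 : ((k.factorial : ℝ)) ≠ 0 := Nat.cast_ne_zero.mpr (Nat.factorial_ne_zero _)
    have h4 : (4:ℝ) ^ k ≠ 0 := by positivity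
    have : z ^ (2 * k) = (z ^ 2) ^ k := by rw [pow_mul]
    rw [this]
    field_simp
    rw [← mul_pow]; congr 1; ring
  have hodd : ∀ k, g (2 * k + 1) = 0 := by
    intro k
    rw [hgval, cos_pow_odd_integral, mul_zero]
  have hsplit := tsum_even_add_odd
    (hg_summable.comp_injective (mul_right_injective₀ (two_ne_zero) : Function.Injective (2 * ·)))
    (hg_summable.comp_injective (fun a b h => by simp only [] at h; omega :
      Function.Injective (fun k => 2 * k + 1)))
  have : ∑' n, g n = π * besselI0 z := by
    rw [← hsplit]
    simp only [heven, hodd, tsum_zero, add_zero]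
    rw [besselI0, tsum_mul_left]
  rw [intervalIntegral.integral_of_le Real.pi_pos.le, ← hswap, this, ← mul_assoc,
    inv_mul_cancel₀ Real.pi_ne_zero, one_mul]

/-- For `β ≥ 0`, `I₀(2β) ≤ exp(β) · I₀(β)`. -/
theorem besselI0_two_mul_le (β : ℝ) (hβ : 0 ≤ β) :
    besselI0 (2 * β) ≤ Real.exp β * besselI0 β := by
  rw [besselI0_eq_integral, besselI0_eq_integral, mul_left_comm]
  apply mul_le_mul_of_nonneg_left _ (by positivity : (0:ℝ) ≤ π⁻¹)
  rw [← intervalIntegral.integral_const_mul]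
  apply intervalIntegral.integral_mono_on Real.pi_pos.le
  · exact (Real.continuous_exp.comp (by fun_prop)).intervalIntegrable 0 π
  · exact (by fun_prop :
      Continuous fun θ => Real.exp β * Real.exp (β * Real.cos θ)).intervalIntegrable 0 π
  · intro θ _
    rw [← Real.exp_add]
    apply Real.exp_le_exp.mpr
    have h1 : β * Real.cos θ ≤ β :=
      mul_le_of_le_one_right hβ (Real.cos_le_one θ)
    nlinarith
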